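/- Let n = d + 1 and let F be a family of subspaces of 𝔽_q^n whose pairwise Δ-distances are at most d, with d = 2t even. Then |F| ≤ Σ_{i=0}^{t} [n choose i]_q. -/

import Mathlib

open Module

/-- The Gaussian binomial coefficient, via the `q`-Pascal recurrence. -/
def gbinom (q : ℕ) : ℕ → ℕ → ℕ
  | _, 0 => 1
  | 0, _ + 1 => 0
  | n + 1, k + 1 => gbinom q n k + q ^ (k + 1) * gbinom q n (k + 1)

open Submodule LinearMap

section Graph

variable {K V : Type*} [Field K] [AddCommGroup V] [Module K V]

/-- Projection onto `H` along `L`, as an endomorphism of `V`. -/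
noncomputable def prj (H L : Submodule K V) (h : IsCompl H L) : V →ₗ[K] V :=
  H.subtype ∘ₗ H.linearProjOfIsCompl L h

lemma prj_apply_left {H L : Submodule K V} (h : IsCompl H L) {x : V} (hx : x ∈ H) :
    prj H L h x = x := by
  exact congrArg (Subtype.val) (Submodule.projectionOnto_apply_left h ⟨x, hx⟩)

lemma prj_apply_right {H L : Submodule K V} (h : IsCompl H L) {x : V} (hx : x ∈ L) :
    prj H L h x = 0 := by
  simp [prj]
  exact Submodule.projectionOnto_apply_of_mem_right h hx

lemma prj_mem {H L : Submodule K V} (h : IsCompl H L) (x : V) : prj H L h x ∈ H :=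
  (H.linearProjOfIsCompl L h x).2

lemma sub_prj_mem {H L : Submodule K V} (h : IsCompl H L) (x : V) : x - prj H L h x ∈ L := by
  have : (H.linearProjOfIsCompl L h x : V) + (L.linearProjOfIsCompl H h.symm x : V) = x :=
    Submodule.projection_add_projection_eq_self h x
  have : x - prj H L h x = (L.linearProjOfIsCompl H h.symm x : V) := by
    show x - (H.linearProjOfIsCompl L h x : V) = _
    exact sub_eq_of_eq_add' this.symm
  rw [this]; exact (L.linearProjOfIsCompl H h.symm x).2

lemma prj_eq_zero_iff {H L : Submodule K V} (h : IsCompl H L) {x : V} :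
    prj H L h x = 0 ↔ x ∈ L := by
  constructor
  · intro hx
    have := sub_prj_mem h x
    rwa [hx, sub_zero] at this
  · exact prj_apply_right h

lemma prj_range {H L : Submodule K V} (h : IsCompl H L) : LinearMap.range (prj H L h) = H := by
  apply le_antisymm
  · rintro x ⟨y, rfl⟩; exact prj_mem h y
  · intro x hx; exact ⟨x, prj_apply_left h hx⟩

end Graph

section Graph2

variable {K V : Type*} [Field K] [AddCommGroup V] [Module K V]

/-- The map sending `g : U →ₗ L` to its graph `{u + g u}`. -/
noncomputable def graphMap (U L : Submodule K V) (g : ↥U →ₗ[K] ↥L) : Submodule K V :=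
  LinearMap.range (U.subtype + L.subtype ∘ₗ g)

lemma mem_graphMap {U L : Submodule K V} {g : ↥U →ₗ[K] ↥L} {x : V} :
    x ∈ graphMap U L g ↔ ∃ u : ↥U, (u : V) + (g u : V) = x := by
  simp [graphMap, LinearMap.mem_range]

lemma graphMap_inf {H L U : Submodule K V} (h : IsCompl H L) (hU : U ≤ H)
    (g : ↥U →ₗ[K] ↥L) : graphMap U L g ⊓ L = ⊥ := by
  rw [eq_bot_iff]
  rintro x ⟨hx1, hx2⟩
  obtain ⟨u, hu⟩ := mem_graphMap.mp hx1
  have hu0 : (u : V) ∈ H ⊓ L := by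
    constructor
    · exact hU u.2
    · have : (u : V) = x - (g u : V) := by rw [← hu]; abel
      rw [this]; exact sub_mem hx2 (g u).2
  rw [h.inf_eq_bot] at hu0
  have hu0' : u = 0 := Subtype.ext hu0
  have : x = 0 := by rw [← hu, hu0']; simp
  simp [this]

lemma graphMap_map_prj {H L U : Submodule K V} (h : IsCompl H L) (hU : U ≤ H)
    (g : ↥U →ₗ[K] ↥L) : (graphMap U L g).map (prj H L h) = U := by
  have : (prj H L h) ∘ₗ (U.subtype + L.subtype ∘ₗ g) = U.subtype := by
    ext u
    simp only [LinearMap.comp_apply, LinearMap.add_apply, map_add, coe_subtype]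
    rw [prj_apply_left h (hU u.2), prj_apply_right h (g u).2, add_zero]
  rw [graphMap, ← LinearMap.range_comp, this, Submodule.range_subtype]

lemma graphMap_finrank [FiniteDimensional K V] {H L : Submodule K V} (h : IsCompl H L)
    {W : Submodule K V} (hWL : W ⊓ L = ⊥) :
    finrank K ↥(W.map (prj H L h)) = finrank K ↥W := by
  set f := (prj H L h) ∘ₗ W.subtype with hf
  have hker : LinearMap.ker f = ⊥ := by
    rw [eq_bot_iff]
    rintro x hx
    have : (x : V) ∈ W ⊓ L := ⟨x.2, (prj_eq_zero_iff h).mp hx⟩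
    rw [hWL, Submodule.mem_bot] at this
    exact Subtype.ext this
  have hrange : LinearMap.range f = W.map (prj H L h) := by
    rw [hf, LinearMap.range_comp, Submodule.range_subtype]
  have := LinearMap.finrank_range_add_finrank_ker f
  rw [hker, hrange, finrank_bot, add_zero] at this
  exact this

/-- Subspaces intersecting `L` trivially and projecting onto `U` are graphs of
linear maps `U →ₗ L`. -/
noncomputable def graphEquiv [FiniteDimensional K V] {H L U : Submodule K V}
    (h : IsCompl H L) (hU : U ≤ H) :
    (↥U →ₗ[K] ↥L) ≃ {W : Submodule K V // W ⊓ L = ⊥ ∧ W.map (prj H L h) = U} := by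
  apply Equiv.ofBijective
    (fun g => ⟨graphMap U L g, graphMap_inf h hU g, graphMap_map_prj h hU g⟩)
  constructor
  · intro g g' hgg'
    have hgg'' : graphMap U L g = graphMap U L g' := congrArg Subtype.val hgg'
    ext u
    have hmem : (u : V) + (g u : V) ∈ graphMap U L g' := by
      rw [← hgg'']; exact mem_graphMap.mpr ⟨u, rfl⟩
    obtain ⟨u', hu'⟩ := mem_graphMap.mp hmem
    have h1 : prj H L h ((u' : V) + (g' u' : V)) = prj H L h ((u : V) + (g u : V)) := by
      rw [hu']
    rw [map_add, map_add, prj_apply_left h (hU u.2), prj_apply_left h (hU u'.2),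
      prj_apply_right h (g u).2, prj_apply_right h (g' u').2, add_zero, add_zero] at h1
    have hu'u : u' = u := Subtype.ext h1
    subst hu'u
    have h2 : (g u' : V) = (g' u' : V) := by
      have := hu'
      nth_rewrite 2 [h1] at this
      exact (add_left_cancel this).symm
    exact congrArg Subtype.val (Subtype.ext h2)
  · rintro ⟨W, hWL, hWU⟩
    -- build the linear map whose graph is `W`
    set f := (prj H L h) ∘ₗ W.subtype with hf
    have hker : LinearMap.ker f = ⊥ := by
      rw [eq_bot_iff]
      rintro x hx
      have hx' : (x : V) ∈ W ⊓ L := ⟨x.2, (prj_eq_zero_iff h).mp hx⟩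
      rw [hWL, Submodule.mem_bot] at hx'
      exact Subtype.ext hx'
    have hrange : LinearMap.range f = U := by
      rw [hf, LinearMap.range_comp, Submodule.range_subtype, hWU]
    let e : ↥W ≃ₗ[K] ↥U :=
      (LinearEquiv.ofInjective f (LinearMap.ker_eq_bot.mp hker)).trans
        (LinearEquiv.ofEq _ _ hrange)
    have he : ∀ w : ↥W, (e w : V) = prj H L h (w : V) := fun w => rfl
    set σ : ↥U →ₗ[K] V := W.subtype ∘ₗ (e.symm : ↥U →ₗ[K] ↥W) with hσ
    have hσmem : ∀ u : ↥U, σ u ∈ W := fun u => (e.symm u).2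
    have hσprj : ∀ u : ↥U, prj H L h (σ u) = (u : V) := by
      intro u
      have := he (e.symm u)
      rw [e.apply_symm_apply] at this
      exact this.symm
    set g : ↥U →ₗ[K] ↥L := (L.linearProjOfIsCompl H h.symm) ∘ₗ σ with hg
    have hgV : ∀ u : ↥U, (g u : V) = σ u - (u : V) := by
      intro u
      have h1 : (H.linearProjOfIsCompl L h (σ u) : V) + (L.linearProjOfIsCompl H h.symm (σ u) : V) = σ u :=
        Submodule.projection_add_projection_eq_self h (σ u)
      have h2 : (H.linearProjOfIsCompl L h (σ u) : V) = prj H L h (σ u) := rfl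
      rw [h2, hσprj u] at h1
      have : (g u : V) = (L.linearProjOfIsCompl H h.symm (σ u) : V) := rfl
      rw [this]
      have h3 : (u:V) + (L.linearProjOfIsCompl H h.symm (σ u) : V) = σ u := h1
      exact eq_sub_of_add_eq' h3
    refine ⟨g, ?_⟩
    apply Subtype.ext
    show graphMap U L g = W
    apply le_antisymm
    · intro x hx
      obtain ⟨u, hu⟩ := mem_graphMap.mp hx
      rw [← hu, hgV u]
      have : (u : V) + (σ u - (u : V)) = σ u := by abel
      rw [this]
      exact hσmem u
    · intro x hx
      apply mem_graphMap.mpr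
      refine ⟨e ⟨x, hx⟩, ?_⟩
      have h1 : (σ (e ⟨x, hx⟩) : V) = x := by
        rw [hσ]
        simp only [LinearMap.comp_apply, coe_subtype, LinearEquiv.coe_coe]
        rw [e.symm_apply_apply]
      rw [hgV, h1]
      abel

end Graph2

section Counting

variable {K : Type*} {V : Type*} [Field K] [Fintype K] [AddCommGroup V] [Module K V]
  [FiniteDimensional K V]

lemma finite_submodule (K V : Type*) [Field K] [AddCommGroup V] [Module K V] [Finite V] :
    Finite (Submodule K V) :=
  Finite.of_injective (fun W => (W : Set V)) SetLike.coe_injective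

lemma nat_card_module (K : Type*) [Field K] [Fintype K] (X : Type*) [AddCommGroup X] [Module K X] [FiniteDimensional K X] :
    Nat.card X = Fintype.card K ^ finrank K X := by
  have : Finite X := Module.finite_of_finite K
  cases nonempty_fintype X
  rw [Nat.card_eq_fintype_card]
  exact card_eq_pow_finrank

lemma nat_card_linearMap (U L : Submodule K V) :
    Nat.card (↥U →ₗ[K] ↥L) = Fintype.card K ^ (finrank K ↥U * finrank K ↥L) := by
  rw [nat_card_module K, Module.finrank_linearMap]

/-- The number of subspaces intersecting `L` trivially and projecting onto `U ≤ H`. -/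
lemma card_graphSet {H L U : Submodule K V} (h : IsCompl H L) (hU : U ≤ H) :
    Nat.card {W : Submodule K V // W ⊓ L = ⊥ ∧ W.map (prj H L h) = U} =
      Fintype.card K ^ (finrank K ↥U * finrank K ↥L) := by
  rw [← Nat.card_congr (graphEquiv h hU), nat_card_linearMap]

lemma isCompl_iff_graph {H L : Submodule K V} (h : IsCompl H L) (D : Submodule K V) :
    IsCompl L D ↔ D ⊓ L = ⊥ ∧ D.map (prj H L h) = H := by
  constructor
  · intro hLD
    refine ⟨by rw [inf_comm]; exact hLD.inf_eq_bot, ?_⟩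
    have h1 : (L ⊔ D).map (prj H L h) = H := by
      rw [hLD.sup_eq_top, Submodule.map_top, prj_range h]
    rw [Submodule.map_sup] at h1
    have h2 : L.map (prj H L h) = ⊥ := by
      rw [Submodule.eq_bot_iff]
      rintro x ⟨y, hy, rfl⟩
      exact prj_apply_right h hy
    rwa [h2, bot_sup_eq] at h1
  · rintro ⟨h1, h2⟩
    constructor
    · rw [disjoint_iff, inf_comm]; exact h1
    · rw [codisjoint_iff, eq_top_iff]
      intro v _
      have hpv : prj H L h v ∈ D.map (prj H L h) := h2.symm ▸ prj_mem h v
      obtain ⟨d, hd, hdv⟩ := hpv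
      have m1 : v - prj H L h v ∈ L := sub_prj_mem h v
      have m2 : prj H L h d - d ∈ L := by
        have := L.neg_mem (sub_prj_mem h d)
        rwa [neg_sub] at this
      have hv : v = ((v - prj H L h v) + (prj H L h d - d)) + d := by
        rw [hdv]; abel
      rw [hv]
      exact Submodule.add_mem_sup (Submodule.add_mem _ m1 m2) hd

lemma card_complements (W : Submodule K V) :
    Nat.card {D : Submodule K V // IsCompl W D} =
      Fintype.card K ^ ((finrank K V - finrank K ↥W) * finrank K ↥W) := by
  obtain ⟨C, hC⟩ := W.exists_isCompl
  have hCW : IsCompl C W := hC.symm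
  have e : {D : Submodule K V // IsCompl W D} ≃
      {D : Submodule K V // D ⊓ W = ⊥ ∧ D.map (prj C W hCW) = C} :=
    Equiv.subtypeEquivRight (fun D => isCompl_iff_graph hCW D)
  rw [Nat.card_congr e, card_graphSet hCW le_rfl]
  congr 2
  have := Submodule.finrank_add_eq_of_isCompl hC
  omega

end Counting

section Grass

variable {K : Type*} [Field K] [Fintype K]

lemma line_dichotomy {V : Type*} [AddCommGroup V] [Module K V] [FiniteDimensional K V]
    {L : Submodule K V} (hL : finrank K ↥L = 1) (W : Submodule K V) :
    W ⊓ L = ⊥ ∨ L ≤ W := by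
  have h1 : W ⊓ L ≤ L := inf_le_right
  have h2 : finrank K ↥(W ⊓ L) ≤ 1 := hL ▸ Submodule.finrank_mono h1
  rcases Nat.eq_or_lt_of_le h2 with h3 | h3
  · right
    have : W ⊓ L = L := Submodule.eq_of_le_of_finrank_le h1 (le_of_eq (hL.trans h3.symm))
    rw [← this]; exact inf_le_left
  · left
    exact Submodule.finrank_eq_zero.mp (by omega)

lemma card_sub_eq {V : Type*} [AddCommGroup V] [Module K V] [FiniteDimensional K V]
    (H : Submodule K V) (k : ℕ) :
    Nat.card {U : Submodule K V // U ≤ H ∧ finrank K ↥U = k} =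
      Nat.card {U : Submodule K ↥H // finrank K ↥U = k} := by
  have hfr : ∀ U : Submodule K ↥H, finrank K ↥(U.map H.subtype) = finrank K ↥U :=
    fun U => (LinearEquiv.finrank_eq (Submodule.equivSubtypeMap H U)).symm
  refine (Nat.card_congr ?_).symm
  calc {U : Submodule K ↥H // finrank K ↥U = k}
      ≃ {x : {p' : Submodule K V // p' ≤ H} // finrank K ↥(x.1) = k} :=
        Equiv.subtypeEquiv (Submodule.MapSubtype.orderIso H).toEquiv (fun U => by
          rw [show ((Submodule.MapSubtype.orderIso H).toEquiv U).1 = U.map H.subtype from rfl,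
            hfr])
    _ ≃ {U : Submodule K V // U ≤ H ∧ finrank K ↥U = k} :=
        Equiv.subtypeSubtypeEquivSubtypeInter (fun p' : Submodule K V => p' ≤ H)
          (fun p' => finrank K ↥p' = k)

theorem nat_card_grass (n : ℕ) : ∀ {V : Type v} [AddCommGroup V] [Module K V]
    [FiniteDimensional K V], finrank K V = n → ∀ k : ℕ,
    Nat.card {W : Submodule K V // finrank K ↥W = k} = gbinom (Fintype.card K) n k := by
  induction n with
  | zero =>
    intro V _ _ _ hV k
    have hsub : Subsingleton V := finrank_zero_iff.mp hV
    have hW : ∀ W : Submodule K V, W = ⊥ := by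
      intro W; ext x; rw [Subsingleton.elim x 0]; simp
    match k with
    | 0 =>
      rw [show gbinom (Fintype.card K) 0 0 = 1 from rfl]
      refine Nat.card_eq_one_iff_unique.mpr ⟨⟨fun a b => Subtype.ext ?_⟩, ⟨⟨⊥, finrank_bot K V⟩⟩⟩
      rw [hW a.1, hW b.1]
    | k + 1 =>
      rw [show gbinom (Fintype.card K) 0 (k+1) = 0 from rfl]
      haveI : IsEmpty {W : Submodule K V // finrank K ↥W = k + 1} := by
        refine ⟨fun W => ?_⟩
        have := W.2
        rw [hW W.1, finrank_bot] at this
        omega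
      exact Nat.card_of_isEmpty
  | succ n ih =>
    intro V _ _ _ hV k
    classical
    haveI : Finite V := Module.finite_of_finite K
    haveI : Finite (Submodule K V) := finite_submodule K V
    match k with
    | 0 =>
      rw [show gbinom (Fintype.card K) (n+1) 0 = 1 from rfl]
      refine Nat.card_eq_one_iff_unique.mpr
        ⟨⟨fun a b => Subtype.ext ?_⟩, ⟨⟨⊥, finrank_bot K V⟩⟩⟩
      rw [Submodule.finrank_eq_zero.mp a.2, Submodule.finrank_eq_zero.mp b.2]
    | k + 1 =>
      -- pick a line L and a complement H
      have h0 : Nontrivial V := Module.nontrivial_of_finrank_pos (by omega : 0 < finrank K V)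
      obtain ⟨v, hv⟩ := exists_ne (0 : V)
      set L : Submodule K V := K ∙ v with hLdef
      have hL : finrank K ↥L = 1 := finrank_span_singleton hv
      obtain ⟨H, hHL'⟩ := L.exists_isCompl
      have hHL : IsCompl H L := hHL'.symm
      have hLH : L ⊓ H = ⊥ := hHL'.inf_eq_bot
      have hH : finrank K ↥H = n := by
        have := Submodule.finrank_add_eq_of_isCompl hHL
        omega
      -- split according to whether L ≤ W
      have hsplit : Nat.card {W : Submodule K V // finrank K ↥W = k+1} =
          Nat.card {W : {W : Submodule K V // finrank K ↥W = k+1} // L ≤ W.1} +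
          Nat.card {W : {W : Submodule K V // finrank K ↥W = k+1} // ¬ L ≤ W.1} := by
        rw [← Nat.card_sum]
        exact Nat.card_congr (Equiv.sumCompl _).symm
      -- Count the subspaces containing L
      have count1 : Nat.card {W : {W : Submodule K V // finrank K ↥W = k+1} // L ≤ W.1} =
          gbinom (Fintype.card K) n k := by
        rw [← ih hH k, ← card_sub_eq H k]
        apply Nat.card_congr
        refine ((Equiv.subtypeSubtypeEquivSubtypeInter _ _).trans ?_)
        refine ⟨fun W => ⟨W.1 ⊓ H, inf_le_right, ?_⟩, fun U => ⟨U.1 ⊔ L, ?_, le_sup_right⟩,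
          ?_, ?_⟩
        · -- finrank (W ⊓ H) = k
          obtain ⟨W, hWk, hLW⟩ := W
          show finrank K ↥(W ⊓ H) = k
          have hsup : (W ⊓ H) ⊔ L = W := by
            rw [inf_sup_assoc_of_le _ hLW, hHL.sup_eq_top, inf_top_eq]
          have hinf : (W ⊓ H) ⊓ L = ⊥ := by
            rw [eq_bot_iff, ← hHL.inf_eq_bot]
            exact inf_le_inf_right L inf_le_right
          have := Submodule.finrank_sup_add_finrank_inf_eq (W ⊓ H) L
          rw [hsup, hinf, finrank_bot, hL] at this
          simp only [add_zero] at this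
          omega
        · -- finrank (U ⊔ L) = k + 1
          obtain ⟨U, hUH, hUk⟩ := U
          show finrank K ↥(U ⊔ L) = k + 1
          have hinf : U ⊓ L = ⊥ := by
            rw [eq_bot_iff, ← hHL.inf_eq_bot]
            exact inf_le_inf_right L hUH
          have := Submodule.finrank_sup_add_finrank_inf_eq U L
          rw [hinf, finrank_bot, hL] at this
          simp only [add_zero] at this
          omega
        · -- left inverse
          rintro ⟨W, hWk, hLW⟩
          apply Subtype.ext
          show (W ⊓ H) ⊔ L = W
          rw [inf_sup_assoc_of_le _ hLW, hHL.sup_eq_top, inf_top_eq]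
        · -- right inverse
          rintro ⟨U, hUH, hUk⟩
          apply Subtype.ext
          show (U ⊔ L) ⊓ H = U
          rw [sup_inf_assoc_of_le _ hUH, hLH, sup_bot_eq]
      -- Count the subspaces intersecting L trivially
      have count2 : Nat.card {W : {W : Submodule K V // finrank K ↥W = k+1} // ¬ L ≤ W.1} =
          Fintype.card K ^ (k+1) * gbinom (Fintype.card K) n (k+1) := by
        -- identify with the subspaces meeting L trivially
        have e0 : {W : {W : Submodule K V // finrank K ↥W = k+1} // ¬ L ≤ W.1} ≃
            {W : Submodule K V // finrank K ↥W = k+1 ∧ W ⊓ L = ⊥} := by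
          refine (Equiv.subtypeSubtypeEquivSubtypeInter
            (fun W : Submodule K V => finrank K ↥W = k+1) (fun W => ¬ L ≤ W)).trans
            (Equiv.subtypeEquivRight fun W => ?_)
          constructor
          · rintro ⟨h1, h2⟩
            refine ⟨h1, ?_⟩
            rcases line_dichotomy hL W with h3 | h3
            · exact h3
            · exact absurd h3 h2
          · rintro ⟨h1, h2⟩
            refine ⟨h1, fun h3 => ?_⟩
            have : L = ⊥ := by
              rw [← h2, eq_comm, inf_eq_right]
              exact h3
            rw [this, finrank_bot] at hL
            omega
        rw [Nat.card_congr e0]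
        -- fibration over the image subspace in H
        set α := {W : Submodule K V // finrank K ↥W = k+1 ∧ W ⊓ L = ⊥} with hα
        set β := {U : Submodule K V // U ≤ H ∧ finrank K ↥U = k+1} with hβ
        have hmapH : ∀ W : Submodule K V, W.map (prj H L hHL) ≤ H := by
          intro W
          refine le_trans LinearMap.map_le_range ?_
          rw [prj_range hHL]
        set F : α → β := fun W => ⟨W.1.map (prj H L hHL), hmapH W.1, by
          rw [graphMap_finrank hHL W.2.2]; exact W.2.1⟩ with hF
        have hcard : Nat.card α = Nat.card (Σ b : β, {a : α // F a = b}) :=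
          (Nat.card_congr (Equiv.sigmaFiberEquiv F)).symm
        haveI : Fintype β := Fintype.ofFinite β
        haveI : ∀ b : β, Fintype {a : α // F a = b} := fun b => Fintype.ofFinite _
        have hfib : ∀ b : β, Nat.card {a : α // F a = b} = Fintype.card K ^ (k+1) := by
          intro b
          have efib : {a : α // F a = b} ≃
              {W : Submodule K V // W ⊓ L = ⊥ ∧ W.map (prj H L hHL) = b.1} := by
            refine ⟨fun a => ⟨a.1.1, a.1.2.2, congrArg Subtype.val a.2⟩,
              fun W => ⟨⟨W.1, ?_, W.2.1⟩, ?_⟩, fun a => ?_, fun W => ?_⟩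
            · rw [← graphMap_finrank hHL W.2.1, W.2.2]
              exact b.2.2
            · exact Subtype.ext W.2.2
            · apply Subtype.ext; apply Subtype.ext; rfl
            · apply Subtype.ext; rfl
          rw [Nat.card_congr efib, card_graphSet hHL b.2.1, b.2.2, hL, mul_one]
        have hsum : Nat.card (Σ b : β, {a : α // F a = b}) =
            Fintype.card β * Fintype.card K ^ (k+1) := by
          rw [Nat.card_eq_fintype_card, Fintype.card_sigma]
          calc ∑ b : β, Fintype.card {a : α // F a = b}
              = ∑ b : β, Fintype.card K ^ (k+1) := by
                refine Finset.sum_congr rfl fun b _ => ?_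
                rw [← Nat.card_eq_fintype_card, hfib b]
            _ = Fintype.card β * Fintype.card K ^ (k+1) := by
                rw [Finset.sum_const, smul_eq_mul, Finset.card_univ]
        have hβcard : Fintype.card β = gbinom (Fintype.card K) n (k+1) := by
          rw [← Nat.card_eq_fintype_card, hβ, card_sub_eq H (k+1), ih hH (k+1)]
        rw [hcard, hsum, hβcard, mul_comm]
      rw [hsplit, count1, count2]
      rfl


end Grass

section Assembly

variable {K : Type*} [Field K] [Fintype K]

lemma nat_card_le_t {V : Type*} [AddCommGroup V] [Module K V] [FiniteDimensional K V]
    {n : ℕ} (hV : finrank K V = n) (t : ℕ) :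
    Nat.card {W : Submodule K V // finrank K ↥W ≤ t} =
      ∑ i ∈ Finset.range (t+1), gbinom (Fintype.card K) n i := by
  classical
  haveI : Finite V := Module.finite_of_finite K
  haveI : Finite (Submodule K V) := finite_submodule K V
  set F : {W : Submodule K V // finrank K ↥W ≤ t} → Fin (t+1) :=
    fun W => ⟨finrank K ↥W.1, by omega⟩ with hF
  have hcard : Nat.card {W : Submodule K V // finrank K ↥W ≤ t} =
      Nat.card (Σ b : Fin (t+1), {a // F a = b}) :=
    (Nat.card_congr (Equiv.sigmaFiberEquiv F)).symm
  haveI : ∀ b : Fin (t+1), Fintype {a // F a = b} := fun b => Fintype.ofFinite _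
  have hfib : ∀ b : Fin (t+1), Nat.card {a // F a = b} =
      gbinom (Fintype.card K) n b.1 := by
    intro b
    rw [← nat_card_grass n hV b.1]
    apply Nat.card_congr
    refine ⟨fun a => ⟨a.1.1, ?_⟩, fun W => ⟨⟨W.1, by rw [W.2]; omega⟩, ?_⟩, fun a => ?_,
      fun W => ?_⟩
    · have := congrArg Fin.val a.2
      exact this
    · apply Fin.ext
      exact W.2
    · apply Subtype.ext; apply Subtype.ext; rfl
    · apply Subtype.ext; rfl
  rw [hcard, Nat.card_eq_fintype_card, Fintype.card_sigma]
  rw [← Fin.sum_univ_eq_sum_range (fun i => gbinom (Fintype.card K) n i) (t+1)]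
  refine Finset.sum_congr rfl fun b _ => ?_
  rw [← Nat.card_eq_fintype_card, hfib b]

end Assembly

section Hall

variable {K : Type*} [Field K] [Fintype K]

lemma exists_complement_inj (V : Type*) [AddCommGroup V] [Module K V]
    [FiniteDimensional K V] (j : ℕ) :
    ∃ f : {B : Submodule K V // finrank K ↥B = j} → Submodule K V,
      Function.Injective f ∧ ∀ B, IsCompl B.1 (f B) := by
  classical
  haveI : Finite V := Module.finite_of_finite K
  haveI : Finite (Submodule K V) := finite_submodule K V
  haveI : Fintype (Submodule K V) := Fintype.ofFinite _
  haveI : Fintype {B : Submodule K V // finrank K ↥B = j} := Fintype.ofFinite _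
  set n := finrank K V with hn
  set D0 := Fintype.card K ^ ((n - j) * j) with hD0
  set tt : {B : Submodule K V // finrank K ↥B = j} → Finset (Submodule K V) :=
    fun B => Finset.univ.filter (fun D => IsCompl B.1 D) with htt
  have hdeg : ∀ B : {B : Submodule K V // finrank K ↥B = j}, (tt B).card = D0 := by
    intro B
    have h1 : Nat.card {D : Submodule K V // IsCompl B.1 D} = (tt B).card := by
      rw [Nat.card_eq_fintype_card, Fintype.card_subtype]
    rw [← h1, card_complements, B.2]
  have hhall : ∀ s : Finset {B : Submodule K V // finrank K ↥B = j},
      s.card ≤ (s.biUnion tt).card := by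
    intro s
    rcases s.eq_empty_or_nonempty with rfl | ⟨B₀, hB₀⟩
    · simp
    have hjn : j ≤ n := by
      rw [← B₀.2, hn]; exact Submodule.finrank_le B₀.1
    set r : {B : Submodule K V // finrank K ↥B = j} → Submodule K V → Prop :=
      fun B D => IsCompl B.1 D with hr
    have hdegD : ∀ D ∈ s.biUnion tt,
        (s.bipartiteBelow r D).card ≤ D0 := by
      intro D hD
      obtain ⟨B₁, _, hB₁D⟩ := Finset.mem_biUnion.mp hD
      have hB₁D' : IsCompl B₁.1 D := by
        simpa [htt] using (Finset.mem_filter.mp hB₁D).2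
      have hDrank : finrank K ↥D = n - j := by
        have := Submodule.finrank_add_eq_of_isCompl hB₁D'
        rw [B₁.2] at this
        omega
      have e : {B : {B : Submodule K V // finrank K ↥B = j} // IsCompl B.1 D} ≃
          {B : Submodule K V // IsCompl D B} := by
        refine ⟨fun x => ⟨x.1.1, x.2.symm⟩, fun B => ⟨⟨B.1, ?_⟩, B.2.symm⟩,
          fun x => ?_, fun B => ?_⟩
        · have := Submodule.finrank_add_eq_of_isCompl B.2
          rw [hDrank] at this
          omega
        · apply Subtype.ext; apply Subtype.ext; rfl
        · apply Subtype.ext; rfl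
      have hcount : Nat.card {B : Submodule K V // IsCompl D B} = D0 := by
        rw [card_complements, hDrank, hD0, hn]
        congr 1
        rw [show n - (n - j) = j from by omega, Nat.mul_comm]
      calc (s.bipartiteBelow r D).card
          ≤ (Finset.univ.filter (fun B : {B : Submodule K V // finrank K ↥B = j} =>
              IsCompl B.1 D)).card := by
            apply Finset.card_le_card
            intro B hB
            rw [Finset.mem_filter]
            exact ⟨Finset.mem_univ _, ((Finset.mem_bipartiteBelow r).mp hB).2⟩
        _ = D0 := by
            rw [← Fintype.card_subtype, ← Nat.card_eq_fintype_card, Nat.card_congr e, hcount]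
    have hdegB : ∀ B ∈ s, D0 ≤
        ((s.biUnion tt).bipartiteAbove r B).card := by
      intro B hB
      rw [← hdeg B]
      apply Finset.card_le_card
      intro D hD
      rw [Finset.mem_bipartiteAbove r]
      refine ⟨Finset.mem_biUnion.mpr ⟨B, hB, hD⟩, ?_⟩
      simpa [htt] using (Finset.mem_filter.mp hD).2
    have hmain := Finset.card_mul_le_card_mul r hdegB hdegD
    have hD0pos : 0 < D0 := by
      rw [hD0]
      exact Nat.pow_pos Fintype.card_pos
    exact Nat.le_of_mul_le_mul_right hmain hD0pos
  obtain ⟨f, hfinj, hfmem⟩ :=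
    (Finset.all_card_le_biUnion_card_iff_exists_injective tt).mp hhall
  refine ⟨f, hfinj, fun B => ?_⟩
  have := hfmem B
  simpa [htt] using (Finset.mem_filter.mp this).2

end Hall

/-- Isodiametric inequality for `n = d + 1`, `d = 2t` even. -/
theorem isodiametric_succ_even {K : Type*} [Field K] [Fintype K]
    (q n d t : ℕ) (hq : Fintype.card K = q) (hpp : IsPrimePow q)
    (hn : n = d + 1) (hd : d = 2 * t)
    (𝓕 : Finset (Submodule K (Fin n → K)))
    (hdiam : ∀ A ∈ 𝓕, ∀ B ∈ 𝓕,
      finrank K ↥A + finrank K ↥B - 2 * finrank K ↥(A ⊓ B) ≤ d) :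
    𝓕.card ≤ ∑ i ∈ Finset.range (t + 1), gbinom q n i := by
  classical
  subst hq
  have hVrank : finrank K (Fin n → K) = n := by simp
  haveI : Finite (Fin n → K) := Module.finite_of_finite K
  haveI : Finite (Submodule K (Fin n → K)) := finite_submodule K (Fin n → K)
  -- choose injective complement maps in each dimension
  choose f hfinj hfcompl using fun j : ℕ => exists_complement_inj (K := K) (Fin n → K) j
  set G : Submodule K (Fin n → K) → Submodule K (Fin n → K) := fun A =>
    if h : finrank K ↥A ≤ t then A else f (finrank K ↥A) ⟨A, rfl⟩ with hG
  have hGlow : ∀ A : Submodule K (Fin n → K), finrank K ↥A ≤ t → G A = A :=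
    fun A h => dif_pos h
  have hGhigh : ∀ A : Submodule K (Fin n → K), ¬ finrank K ↥A ≤ t →
      G A = f (finrank K ↥A) ⟨A, rfl⟩ := fun A h => dif_neg h
  have hrankle : ∀ A : Submodule K (Fin n → K), finrank K ↥A ≤ n := by
    intro A
    have := Submodule.finrank_le A
    rwa [hVrank] at this
  have hGcompl : ∀ A : Submodule K (Fin n → K), ¬ finrank K ↥A ≤ t →
      IsCompl A (G A) := by
    intro A hA
    rw [hGhigh A hA]
    exact hfcompl (finrank K ↥A) ⟨A, rfl⟩
  have hGrank : ∀ A : Submodule K (Fin n → K), ¬ finrank K ↥A ≤ t →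
      finrank K ↥A + finrank K ↥(G A) = n := by
    intro A hA
    have h1 := Submodule.finrank_add_eq_of_isCompl (hGcompl A hA)
    rwa [hVrank] at h1
  have hGle : ∀ A : Submodule K (Fin n → K), finrank K ↥(G A) ≤ t := by
    intro A
    by_cases hA : finrank K ↥A ≤ t
    · rw [hGlow A hA]; exact hA
    · have h1 := hGrank A hA
      omega
  -- no two complementary subspaces are both in 𝓕
  have hnocompl : ∀ A ∈ 𝓕, ∀ B ∈ 𝓕, ¬ IsCompl B A := by
    intro A hA B hB hcompl
    have h1 := hdiam A hA B hB
    have h2 : A ⊓ B = ⊥ := by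
      rw [inf_comm]; exact hcompl.inf_eq_bot
    have h3 := Submodule.finrank_add_eq_of_isCompl hcompl
    rw [hVrank] at h3
    rw [h2, finrank_bot] at h1
    omega
  -- G is injective on 𝓕
  have hGinjOn : ∀ A ∈ 𝓕, ∀ B ∈ 𝓕, G A = G B → A = B := by
    intro A hA B hB hGAB
    by_cases h1 : finrank K ↥A ≤ t <;> by_cases h2 : finrank K ↥B ≤ t
    · rw [hGlow A h1, hGlow B h2] at hGAB; exact hGAB
    · exfalso
      rw [hGlow A h1] at hGAB
      exact hnocompl A hA B hB (hGAB ▸ hGcompl B h2)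
    · exfalso
      rw [hGlow B h2] at hGAB
      exact hnocompl B hB A hA (hGAB.symm ▸ hGcompl A h1)
    · have hrA := hGrank A h1
      have hrB := hGrank B h2
      rw [hGAB] at hrA
      have hrank : finrank K ↥B = finrank K ↥A := by omega
      have htrans : ∀ (j : ℕ) (e : finrank K ↥B = j),
          f (finrank K ↥B) ⟨B, rfl⟩ = f j ⟨B, e⟩ := by
        rintro j rfl; rfl
      have hGA' : G A = f (finrank K ↥A) ⟨A, rfl⟩ := hGhigh A h1
      have hGB' : G B = f (finrank K ↥A) ⟨B, hrank⟩ := by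
        rw [hGhigh B h2]
        exact htrans _ hrank
      rw [hGA', hGB'] at hGAB
      have := hfinj _ hGAB
      exact congrArg Subtype.val this
  -- conclude by counting
  have hcardle : 𝓕.card ≤
      Nat.card {W : Submodule K (Fin n → K) // finrank K ↥W ≤ t} := by
    have hinj : Function.Injective
        (fun A : {A : Submodule K (Fin n → K) // A ∈ 𝓕} => (⟨G A.1, hGle A.1⟩ :
          {W : Submodule K (Fin n → K) // finrank K ↥W ≤ t})) := by
      intro A B hAB
      apply Subtype.ext
      exact hGinjOn A.1 A.2 B.1 B.2 (congrArg Subtype.val hAB)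
    calc 𝓕.card = Nat.card {A : Submodule K (Fin n → K) // A ∈ 𝓕} :=
          (Nat.card_eq_finsetCard 𝓕).symm
      _ ≤ Nat.card {W : Submodule K (Fin n → K) // finrank K ↥W ≤ t} :=
          Nat.card_le_card_of_injective _ hinj
  rw [nat_card_le_t hVrank t] at hcardle
  exact hcardle
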